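/- The Lebesgue measure of the set {(x,y) ∈ (0,1)² : y < (1/2)(1 − x + √(1 + 2x − 3x²))} equals (9 + 2√3·π)/27, and consequently the Lebesgue measure of {(x,y) ∈ (0,1)² : y > (1/2)(1 − x + √(1 + 2x − 3x²))} equals (18 − 2√3·π)/27. -/

import Mathlib

open MeasureTheory Set

noncomputable def stagF (x : ℝ) : ℝ := (1/2) * (1 - x + Real.sqrt (1 + 2 * x - 3 * x ^ 2))

noncomputable def stagG (x : ℝ) : ℝ :=
  (1/2)*(x - x^2/2) + (x - 1/3)/4 * Real.sqrt (1 + 2*x - 3*x^2)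
    + (Real.sqrt 3/9) * Real.arcsin ((3*x - 1)/2)

lemma stagQ_pos {x : ℝ} (hx : x ∈ Ioo (0:ℝ) 1) : 0 < 1 + 2*x - 3*x^2 := by
  nlinarith [hx.1, hx.2]

lemma stagF_pos {x : ℝ} (hx : x ∈ Ioo (0:ℝ) 1) : 0 < stagF x := by
  have := Real.sqrt_nonneg (1 + 2*x - 3*x^2)
  unfold stagF
  nlinarith [hx.2]

lemma stagF_lt_one {x : ℝ} (hx : x ∈ Ioo (0:ℝ) 1) : stagF x < 1 := by
  have h : Real.sqrt (1 + 2*x - 3*x^2) < 1 + x := by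
    rw [Real.sqrt_lt' (by linarith [hx.1])]
    nlinarith [hx.1]
  unfold stagF; nlinarith

lemma stagF_cont : Continuous stagF := by
  unfold stagF; fun_prop

lemma stagG_deriv {x : ℝ} (hx : x ∈ Ioo (0:ℝ) 1) : HasDerivAt stagG (stagF x) x := by
  have hQ : 0 < 1 + 2*x - 3*x^2 := stagQ_pos hx
  set s := Real.sqrt (1 + 2*x - 3*x^2) with hs_def
  have hs0 : 0 < s := Real.sqrt_pos.mpr hQ
  have hs2 : s^2 = 1 + 2*x - 3*x^2 := Real.sq_sqrt hQ.le
  -- derivative of the polynomial inside sqrt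
  have hQd : HasDerivAt (fun x : ℝ => 1 + 2*x - 3*x^2) (2 - 6*x) x := by
    have h1 := ((hasDerivAt_id x).const_mul (2:ℝ))
    have h2 := ((hasDerivAt_pow 2 x).const_mul (3:ℝ))
    have h := ((hasDerivAt_const x (1:ℝ)).add h1).sub h2
    refine h.congr_deriv ?_
    push_cast; ring
  have hsqrt : HasDerivAt (fun x : ℝ => Real.sqrt (1 + 2*x - 3*x^2))
      ((2 - 6*x) / (2 * s)) x := by
    have h := (Real.hasDerivAt_sqrt hQ.ne').comp x hQd
    refine h.congr_deriv ?_
    rw [← hs_def]; ring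
  -- arcsin part
  have hu : HasDerivAt (fun x : ℝ => (3*x - 1)/2) (3/2) x := by
    have h1 := ((hasDerivAt_id x).const_mul (3:ℝ)).sub (hasDerivAt_const x (1:ℝ))
    simpa using h1.div_const 2
  have hune1 : (3*x - 1)/2 ≠ -1 := by
    intro h; have := hx.1; nlinarith [h]
  have hune2 : (3*x - 1)/2 ≠ 1 := by
    intro h; have := hx.2; nlinarith [h]
  have harcsin : HasDerivAt (fun x : ℝ => Real.arcsin ((3*x - 1)/2))
      (1 / Real.sqrt (1 - ((3*x - 1)/2)^2) * (3/2)) x :=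
    by have := (Real.hasDerivAt_arcsin hune1 hune2).comp x hu; exact this
  have hkey : Real.sqrt (1 - ((3*x - 1)/2)^2) = Real.sqrt 3 * s / 2 := by
    have h1 : 1 - ((3*x - 1)/2)^2 = (3 * (1 + 2*x - 3*x^2)) / 4 := by ring
    rw [h1, ← hs2]
    rw [show (3 * s^2 / 4 : ℝ) = (Real.sqrt 3 * s / 2)^2 by
      have : Real.sqrt 3 ^ 2 = 3 := Real.sq_sqrt (by norm_num)
      nlinarith [this]]
    exact Real.sqrt_sq (by positivity)
  -- polynomial part
  have hpoly : HasDerivAt (fun x : ℝ => (1/2)*(x - x^2/2)) ((1/2)*(1 - x)) x := by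
    have h1 := (hasDerivAt_id x).sub ((hasDerivAt_pow 2 x).div_const 2)
    have := h1.const_mul (1/2 : ℝ)
    refine this.congr_deriv ?_; ring
  -- product part
  have hlin : HasDerivAt (fun x : ℝ => (x - 1/3)/4) (1/4) x := by
    have := ((hasDerivAt_id x).sub (hasDerivAt_const x (1/3 : ℝ))).div_const 4
    simpa using this
  have hprod := hlin.mul hsqrt
  have harc := harcsin.const_mul (Real.sqrt 3 / 9)
  have hsum := (hpoly.add hprod).add harc
  have h3 : (0:ℝ) < Real.sqrt 3 := Real.sqrt_pos.mpr (by norm_num)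
  refine hsum.congr_deriv ?_
  rw [hkey]
  unfold stagF
  rw [← hs_def]
  have harcval : Real.sqrt 3 / 9 * (1 / (Real.sqrt 3 * s / 2) * (3/2)) = 1/(3*s) := by
    field_simp
    ring
  rw [harcval]
  have hrest : 1/4 * s + (x - 1/3)/4 * ((2 - 6*x)/(2*s)) + 1/(3*s) = s/2 := by
    field_simp
    ring_nf
    linear_combination (-6) * hs2
  linarith [hrest]

lemma stagG_cont : Continuous stagG := by
  unfold stagG
  have h1 : Continuous fun x : ℝ => Real.arcsin ((3*x - 1)/2) :=
    Real.continuous_arcsin.comp (by fun_prop)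
  fun_prop

lemma stag_integral : ∫ x in (0:ℝ)..1, stagF x = (9 + 2 * Real.sqrt 3 * Real.pi) / 27 := by
  have h := intervalIntegral.integral_eq_sub_of_hasDerivAt_of_le (by norm_num : (0:ℝ) ≤ 1)
    stagG_cont.continuousOn (fun x hx => stagG_deriv hx)
    (stagF_cont.intervalIntegrable 0 1)
  rw [h]
  have e1 : (1:ℝ) + 2*1 - 3*1^2 = 0 := by norm_num
  have e0 : (1:ℝ) + 2*0 - 3*0^2 = 1 := by norm_num
  have ha1 : Real.arcsin ((3*1 - 1)/2) = Real.pi / 2 := by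
    norm_num [Real.arcsin_one]
  have ha0 : Real.arcsin ((3*0 - 1)/2) = -(Real.pi / 6) := by
    have : ((3*(0:ℝ) - 1)/2) = -(1/2) := by norm_num
    rw [this, Real.arcsin_neg]
    have : Real.arcsin (1/2) = Real.pi/6 := by
      rw [show (1/2 : ℝ) = Real.sin (Real.pi/6) by rw [Real.sin_pi_div_six]]
      exact Real.arcsin_sin (by linarith [Real.pi_pos]) (by linarith [Real.pi_pos])
    rw [this]
  unfold stagG
  rw [e1, e0, ha1, ha0, Real.sqrt_zero, Real.sqrt_one]
  ring

theorem stagHunt_basin_measures :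
    volume {p : ℝ × ℝ | p.1 ∈ Ioo (0:ℝ) 1 ∧ p.2 ∈ Ioo (0:ℝ) 1 ∧
        p.2 < (1/2) * (1 - p.1 + Real.sqrt (1 + 2 * p.1 - 3 * p.1 ^ 2))} =
      ENNReal.ofReal ((9 + 2 * Real.sqrt 3 * Real.pi) / 27) ∧
    volume {p : ℝ × ℝ | p.1 ∈ Ioo (0:ℝ) 1 ∧ p.2 ∈ Ioo (0:ℝ) 1 ∧
        p.2 > (1/2) * (1 - p.1 + Real.sqrt (1 + 2 * p.1 - 3 * p.1 ^ 2))} =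
      ENNReal.ofReal ((18 - 2 * Real.sqrt 3 * Real.pi) / 27) := by
  have hIoo : IntegrableOn stagF (Ioo (0:ℝ) 1) volume :=
    (stagF_cont.continuousOn.integrableOn_Icc).mono_set Ioo_subset_Icc_self
  have h0int : IntegrableOn (fun _ : ℝ => (0:ℝ)) (Ioo (0:ℝ) 1) volume :=
    integrableOn_const measure_Ioo_lt_top.ne
  have h1int : IntegrableOn (fun _ : ℝ => (1:ℝ)) (Ioo (0:ℝ) 1) volume :=
    integrableOn_const measure_Ioo_lt_top.ne
  have hintIoo : ∫ x in Ioo (0:ℝ) 1, stagF x = (9 + 2 * Real.sqrt 3 * Real.pi) / 27 := by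
    rw [← MeasureTheory.integral_Ioc_eq_integral_Ioo,
      ← intervalIntegral.integral_of_le (by norm_num : (0:ℝ) ≤ 1)]
    exact stag_integral
  constructor
  · have hset : {p : ℝ × ℝ | p.1 ∈ Ioo (0:ℝ) 1 ∧ p.2 ∈ Ioo (0:ℝ) 1 ∧
        p.2 < (1/2) * (1 - p.1 + Real.sqrt (1 + 2 * p.1 - 3 * p.1 ^ 2))} =
        regionBetween (fun _ => 0) stagF (Ioo 0 1) := by
      ext p
      simp only [regionBetween, mem_setOf_eq, mem_Ioo]
      constructor
      · rintro ⟨h1, ⟨h2a, _⟩, h3⟩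
        exact ⟨h1, h2a, h3⟩
      · rintro ⟨h1, h2, h3⟩
        exact ⟨h1, ⟨h2, lt_trans h3 (stagF_lt_one h1)⟩, h3⟩
    rw [hset, MeasureTheory.Measure.volume_eq_prod,
      volume_regionBetween_eq_integral h0int hIoo measurableSet_Ioo
        (fun x hx => (stagF_pos hx).le)]
    simp only [Pi.sub_apply, sub_zero]
    rw [hintIoo]
  · have hset : {p : ℝ × ℝ | p.1 ∈ Ioo (0:ℝ) 1 ∧ p.2 ∈ Ioo (0:ℝ) 1 ∧
        p.2 > (1/2) * (1 - p.1 + Real.sqrt (1 + 2 * p.1 - 3 * p.1 ^ 2))} =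
        regionBetween stagF (fun _ => 1) (Ioo 0 1) := by
      ext p
      simp only [regionBetween, mem_setOf_eq, mem_Ioo]
      constructor
      · rintro ⟨h1, ⟨_, h2b⟩, h3⟩
        exact ⟨h1, h3, h2b⟩
      · rintro ⟨h1, h2, h3⟩
        exact ⟨h1, ⟨lt_trans (stagF_pos h1) h2, h3⟩, h2⟩
    rw [hset, MeasureTheory.Measure.volume_eq_prod,
      volume_regionBetween_eq_integral hIoo h1int measurableSet_Ioo
        (fun x hx => (stagF_lt_one hx).le)]
    congr 1
    simp only [Pi.sub_apply]
    rw [MeasureTheory.integral_sub h1int hIoo, hintIoo]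
    simp only [MeasureTheory.setIntegral_const, Real.volume_Ioo, smul_eq_mul, mul_one]
    rw [Real.volume_real_Ioo_of_le (by norm_num)]
    ring
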